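/- arXiv:1908.11515 — 2 statements merged into one kernel-verified Lean document; each statement's English description precedes it below -/
import Mathlib

section
/- Variance of the GRR frequency estimator: under the setup where n users report independently via GRR with truth probability p and lie probability q = (1-p)/(d-1), and f_v is the true frequency of v, the variance of the estimator f̃_v = (1/n)Σ_i (1[y_i=v]-q)/(p-q) equals q(1-q)/(n(p-q)²) + f_v(1-p-q)/(n(p-q)). -/
open MeasureTheory ProbabilityTheory

lemma var_single {Ω : Type*} [MeasurableSpace Ω] (μ : Measure Ω) [IsProbabilityMeasure μ]
    (P : Ω → Prop) [DecidablePred P] (hA : MeasurableSet {ω | P ω}) (q c r : ℝ)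
    (hr : (μ {ω | P ω}).toReal = r) :
    variance (fun ω => c * ((if P ω then (1:ℝ) else 0) - q)) μ = (r - r^2) * c^2 := by
  set A : Set Ω := {ω | P ω} with hAdef
  have hind : (fun ω => c * ((if P ω then (1:ℝ) else 0) - q))
      = fun ω => c * ((A.indicator (fun _ => (1:ℝ)) ω) - q) := by
    funext ω; by_cases h : P ω <;> simp [Set.indicator_apply, hAdef, h]
  have hIint : Integrable (A.indicator (fun _ => (1:ℝ))) μ :=
    (memLp_indicator_const 1 hA (1:ℝ) (Or.inr (measure_ne_top μ A))).integrable le_rfl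
  have hmem : MemLp (fun ω => c * ((if P ω then (1:ℝ) else 0) - q)) 2 μ := by
    rw [hind]
    exact ((memLp_indicator_const 2 hA (1:ℝ) (Or.inr (measure_ne_top μ A))).sub
      (memLp_const q)).const_mul c
  rw [variance_eq_sub hmem, hind]
  have hI : ∫ ω, A.indicator (fun _ => (1:ℝ)) ω ∂μ = r := by
    rw [integral_indicator_const _ hA]; simp [Measure.real, hr]
  have h1 : ∫ ω, c * ((A.indicator (fun _ => (1:ℝ)) ω) - q) ∂μ = c * (r - q) := by
    rw [integral_const_mul, integral_sub hIint (integrable_const q), hI, integral_const]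
    simp
  have h2 : ∫ ω, (c * ((A.indicator (fun _ => (1:ℝ)) ω) - q))^2 ∂μ
      = ((1 - 2*q) * c^2) * r + q^2 * c^2 := by
    have hfun : (fun ω => (c * ((A.indicator (fun _ => (1:ℝ)) ω) - q))^2)
        = fun ω => ((1 - 2*q) * c^2) * A.indicator (fun _ => (1:ℝ)) ω + q^2 * c^2 := by
      funext ω
      by_cases h : ω ∈ A <;> simp [Set.indicator_of_mem, Set.indicator_of_notMem, h] <;> ring
    rw [hfun, integral_add (hIint.const_mul _) (integrable_const _), integral_const_mul, hI,
      integral_const]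
    simp
  simp only [Pi.pow_apply]
  rw [h2, h1]
  ring

theorem grr_estimator_variance {Ω D : Type*} [MeasurableSpace Ω] [MeasurableSpace D]
    [MeasurableSingletonClass D] [DecidableEq D]
    (μ : Measure Ω) [IsProbabilityMeasure μ]
    (n d : ℕ) (hn : 0 < n) (hd : 2 ≤ d) (hcard : Nat.card D = d)
    (p q : ℝ) (hq : q = (1 - p) / (d - 1)) (h0q : 0 < q) (hqp : q < p) (hp1 : p ≤ 1)
    (v : D) (vs : Fin n → D) (y : Fin n → Ω → D)
    (hmeas : ∀ i, Measurable (y i))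
    (hindep : iIndepFun y μ)
    (hdist : ∀ i w, (μ {ω | y i ω = w}).toReal = if vs i = w then p else q) :
    variance (fun ω => ((1:ℝ)/n) * ∑ i, ((if y i ω = v then (1:ℝ) else 0) - q) / (p - q)) μ
      = q * (1 - q) / (n * (p - q)^2)
        + ((1/n) * ∑ i, if vs i = v then (1:ℝ) else 0) * (1 - p - q) / (n * (p - q)) := by
  have hpq : p - q ≠ 0 := sub_ne_zero.2 (ne_of_gt hqp)
  have hnR : (n:ℝ) ≠ 0 := Nat.cast_ne_zero.2 hn.ne'
  set g : D → ℝ := fun w => (p - q)⁻¹ * ((if w = v then (1:ℝ) else 0) - q) with hg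
  have hgm : Measurable g := by
    apply Measurable.const_mul
    apply Measurable.sub_const
    exact Measurable.ite (measurableSet_eq) measurable_const measurable_const
  set X : Fin n → Ω → ℝ := fun i ω => g (y i ω) with hX
  have hXindep : iIndepFun X μ :=
    hindep.comp _ (fun _ => hgm)
  have hXmeas : ∀ i, MeasurableSet {ω | y i ω = v} :=
    fun i => (hmeas i) (measurableSet_singleton v)
  have hXvar : ∀ i, variance (X i) μ
      = ((if vs i = v then p else q) - (if vs i = v then p else q)^2) * ((p-q)⁻¹)^2 := by
    intro i
    have := var_single μ (fun ω => y i ω = v) (hXmeas i) q (p-q)⁻¹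
      (if vs i = v then p else q) (hdist i v)
    convert this using 2
  have hXmem : ∀ i, MemLp (X i) 2 μ := by
    intro i
    have hind : X i = fun ω =>
        (p - q)⁻¹ * (({ω | y i ω = v}.indicator (fun _ => (1:ℝ)) ω) - q) := by
      funext ω; by_cases h : y i ω = v <;>
        simp [hX, hg, Set.indicator_apply, Set.mem_setOf_eq, h]
    rw [hind]
    exact ((memLp_indicator_const 2 (hXmeas i) (1:ℝ)
      (Or.inr (measure_ne_top μ _))).sub (memLp_const q)).const_mul _
  have hfun : (fun ω => ((1:ℝ)/n) * ∑ i, ((if y i ω = v then (1:ℝ) else 0) - q) / (p - q))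
      = fun ω => ((1:ℝ)/n) * (∑ i, X i) ω := by
    funext ω
    simp only [hX, hg, Finset.sum_apply]
    congr 1
    exact Finset.sum_congr rfl (fun i _ => by rw [div_eq_inv_mul])
  rw [hfun, variance_const_mul, IndepFun.variance_sum (fun i _ => hXmem i)
    (fun i _ j _ hij => hXindep.indepFun hij)]
  have hterm : ∀ i, variance (X i) μ
      = q * (1-q) * ((p-q)⁻¹)^2 + (if vs i = v then (1:ℝ) else 0) * ((1-p-q) * (p-q)⁻¹) := by
    intro i
    rw [hXvar i]
    by_cases h : vs i = v <;> simp only [h, if_pos, if_true, if_neg, if_false, one_mul, zero_mul,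
      add_zero] <;> field_simp <;> ring
  rw [Finset.sum_congr rfl (fun i _ => hterm i), Finset.sum_add_distrib, Finset.sum_const,
    ← Finset.sum_mul]
  simp only [Finset.card_univ, Fintype.card_fin, nsmul_eq_mul]
  field_simp
end

section
/- Optimal hash domain size for shuffler-optimal local hashing: for fixed m > 1 and n > 0, the function Var(d') = m²/(n·(m - d')²·(d' - 1)) on the interval 1 < d' < m attains its minimum at d' = (m+2)/3, and this is the unique critical point in the interval. -/
theorem solh_optimal_d (m n : ℝ) (hm : 1 < m) (hn : 0 < n) :
    IsMinOn (fun d' : ℝ => m^2 / (n * (m - d')^2 * (d' - 1))) (Set.Ioo 1 m) ((m + 2) / 3) ∧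
    ∀ x ∈ Set.Ioo (1:ℝ) m,
      deriv (fun d' : ℝ => m^2 / (n * (m - d')^2 * (d' - 1))) x = 0 → x = (m + 2) / 3 := by
  have hden : ∀ x, 1 < x → x < m → (0:ℝ) < n * (m - x)^2 * (x - 1) := by
    intro x h1 h2
    have : (0:ℝ) < (m - x)^2 := pow_pos (by linarith) 2
    have : (0:ℝ) < x - 1 := by linarith
    positivity
  constructor
  · rw [isMinOn_iff]
    intro x hx
    obtain ⟨h1, h2⟩ := hx
    have hc1 : (1:ℝ) < (m + 2) / 3 := by linarith
    have hc2 : (m + 2) / 3 < m := by linarith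
    have hx0 := hden x h1 h2
    have hc0 := hden _ hc1 hc2
    show m^2 / (n * (m - (m+2)/3)^2 * ((m+2)/3 - 1)) ≤ m^2 / (n * (m - x)^2 * (x - 1))
    gcongr m^2 / ?_
    · nlinarith [mul_nonneg (mul_nonneg hn.le (sq_nonneg (3*x - m - 2)))
        (by linarith : (0:ℝ) ≤ 4*m - 1 - 3*x)]
  · intro x hx hderiv
    obtain ⟨h1, h2⟩ := hx
    have hx0 := hden x h1 h2
    have hg : HasDerivAt (fun d' : ℝ => n * (m - d')^2 * (d' - 1))
        ((n * (2 * (m - x)^1 * (-1))) * (x - 1) + (n * (m - x)^2) * 1) x := by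
      have hmx : HasDerivAt (fun d' : ℝ => m - d') (-1) x := by
        simpa [Pi.sub_def] using (hasDerivAt_const x m).sub (hasDerivAt_id x)
      have hsq := hmx.pow 2
      have h1' : HasDerivAt (fun d' : ℝ => n * (m - d')^2) (n * (2 * (m - x)^1 * (-1))) x :=
        hsq.const_mul n
      have h2' : HasDerivAt (fun d' : ℝ => d' - 1) 1 x := by
        simpa using (hasDerivAt_id x).sub_const 1
      simpa [Pi.mul_def] using h1'.mul h2'
    have hf : HasDerivAt (fun d' : ℝ => m^2 / (n * (m - d')^2 * (d' - 1)))
        ((0 * (n * (m - x)^2 * (x - 1)) -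
          m^2 * ((n * (2 * (m - x)^1 * (-1))) * (x - 1) + (n * (m - x)^2) * 1)) /
          (n * (m - x)^2 * (x - 1))^2) x :=
      (hasDerivAt_const x (m^2)).div hg (ne_of_gt hx0)
    rw [hf.deriv] at hderiv
    have hsq0 : ((n * (m - x)^2 * (x - 1))^2) ≠ 0 := pow_ne_zero 2 (ne_of_gt hx0)
    have hnum : (0 * (n * (m - x)^2 * (x - 1)) -
          m^2 * ((n * (2 * (m - x)^1 * (-1))) * (x - 1) + (n * (m - x)^2) * 1)) = 0 := by
      exact (div_eq_zero_iff.mp hderiv).resolve_right hsq0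
    have hm2 : m^2 > 0 := by positivity
    have key : n * (m - x) * (m + 2 - 3*x) = 0 := by
      have : m^2 * (n * (m - x) * (m + 2 - 3*x)) = 0 := by linear_combination -hnum
      rcases mul_eq_zero.mp this with h | h
      · exact absurd h (ne_of_gt hm2)
      · exact h
    rcases mul_eq_zero.mp key with h | h
    · rcases mul_eq_zero.mp h with h' | h'
      · exact absurd h' (ne_of_gt hn)
      · linarith
    · linarith
end
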